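/- The set of integers ℤ with the Euclidean metric is plastic: every non-expansive bijection φ : ℤ → ℤ is an isometry. -/

import Mathlib

theorem integers_plastic (φ : ℤ → ℤ) (hbij : Function.Bijective φ)
    (hne : ∀ m n : ℤ, dist (φ m) (φ n) ≤ dist m n) :
    ∀ m n : ℤ, dist (φ m) (φ n) = dist m n := by
  have hinj := hbij.1
  have habs : ∀ m n : ℤ, |φ m - φ n| ≤ |m - n| := by
    intro m n
    have h := hne m n
    rw [Int.dist_eq, Int.dist_eq] at h
    exact_mod_cast h
  have hs : ∀ i : ℤ, φ (i + 1) - φ i = 1 ∨ φ (i + 1) - φ i = -1 := by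
    intro i
    have h1 : |φ (i + 1) - φ i| ≤ 1 := by simpa using habs (i + 1) i
    have h0 : φ (i + 1) - φ i ≠ 0 := by
      intro h
      have h2 : φ (i + 1) = φ i := by omega
      have := hinj h2
      omega
    rcases abs_le.mp h1 with ⟨hl, hr⟩
    omega
  have step : ∀ i : ℤ, φ (i + 1 + 1) - φ (i + 1) = φ (i + 1) - φ i := by
    intro i
    rcases hs i with h | h <;> rcases hs (i + 1) with h' | h' <;> try omega
    · exfalso
      have h2 : φ (i + 1 + 1) = φ i := by omega
      have := hinj h2
      omega
    · exfalso
      have h2 : φ (i + 1 + 1) = φ i := by omega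
      have := hinj h2
      omega
  have hconst : ∀ i : ℤ, φ (i + 1) - φ i = φ 1 - φ 0 := by
    intro i
    induction i using Int.induction_on with
    | zero => norm_num
    | succ k ih => rw [step k]; exact ih
    | pred k ih =>
      have hstep := step (-(k : ℤ) - 1)
      have e : -(k : ℤ) - 1 + 1 = -k := by ring
      rw [e] at hstep
      rw [e]
      omega
  set c : ℤ := φ 1 - φ 0 with hc
  have hlin : ∀ n : ℤ, φ n = φ 0 + c * n := by
    intro n
    induction n using Int.induction_on with
    | zero => ring
    | succ k ih => have h := hconst k; linear_combination ih + h
    | pred k ih =>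
      have h := hconst (-(k : ℤ) - 1)
      have e : -(k : ℤ) - 1 + 1 = -k := by ring
      rw [e] at h
      linear_combination ih - h
  have hcabs : c = 1 ∨ c = -1 := by simpa using hs 0
  intro m n
  rw [Int.dist_eq, Int.dist_eq]
  have : |φ m - φ n| = |m - n| := by
    rw [hlin m, hlin n]
    have : φ 0 + c * m - (φ 0 + c * n) = c * (m - n) := by ring
    rw [this, abs_mul]
    rcases hcabs with h | h <;> simp [h]
  exact_mod_cast this
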